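/- Let (Δ, 𝔬, m) be a loopless Brauer graph, and for each pair of vertices {μ,ν} joined by α ≥ 2 parallel edges (an α-marked pair), choose a distinguished vertex. List the marked pairs {μ₁,ν₁},…,{μ_n,ν_n} with multiplicities α₁,…,α_n, let G = ∏_{k=1}^n ℤ_{α_k}, and define W: 𝒵_Δ → G by W(i,j) = z_k (the element with generator g_k in component k, identity elsewhere) if the endpoints of i form the k-th marked pair and the vertex at which j succeeds i is the distinguished vertex of that pair, and W(i,j) = id otherwise. Then ω_μ = id for every vertex μ, W is a Brauer weighting, and the covering graph Δ_W has no multiple edges between any two vertices. -/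

import Mathlib

/-- A Brauer graph `(Γ, 𝔬, m)`, presented via half-edges: `H` is the (finite, nonempty)
set of half-edges, `σ` is the successor permutation whose cycle at a vertex lists the
incident half-edges in the cyclic order `𝔬` (a loop contributes two half-edges, i.e. is
"listed twice"), `ι` is the fixed-point-free involution pairing the two half-edges of
each edge, `v` assigns to each half-edge its vertex (so the fibres of `v` are exactly
the cycles of `σ`), the graph is connected, and `m` is the multiplicity function. -/
structure BrauerGraph where
  H : Type
  V : Type
  fintypeH : Fintype H
  decEqH : DecidableEq H
  fintypeV : Fintype V
  decEqV : DecidableEq V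
  nonemptyH : Nonempty H
  σ : Equiv.Perm H
  ι : Equiv.Perm H
  ι_invol : ∀ h, ι (ι h) = h
  ι_ne : ∀ h, ι h ≠ h
  v : H → V
  v_surj : Function.Surjective v
  v_eq_iff : ∀ h h', v h = v h' ↔ ∃ n : ℤ, (σ ^ n) h = h'
  connected : ∀ h h' : H, ∃ g ∈ Subgroup.closure ({σ, ι} : Set (Equiv.Perm H)), g h = h'
  m : V → ℕ
  m_pos : ∀ μ, 0 < m μ

attribute [instance] BrauerGraph.fintypeH BrauerGraph.decEqH
attribute [instance] BrauerGraph.fintypeV BrauerGraph.decEqV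

namespace BrauerGraph

variable (Γ : BrauerGraph)

/-- The valency of a vertex: the number of incident half-edges (loops counted twice). -/
noncomputable def val (μ : Γ.V) : ℕ := Nat.card {h : Γ.H // Γ.v h = μ}

end BrauerGraph

/-- A Brauer action of a group `G` on a Brauer graph: a faithful action on half-edges
commuting with the successor permutation (i.e. orientation/successor preserving) and
with the edge involution (i.e. an action by graph automorphisms), and preserving the
multiplicity function. -/
structure BrauerAction (G : Type) [Group G] (Γ : BrauerGraph) where
  e : G →* Equiv.Perm Γ.H
  faithful : Function.Injective e
  comm_σ : ∀ g h, e g (Γ.σ h) = Γ.σ (e g h)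
  comm_ι : ∀ g h, e g (Γ.ι h) = Γ.ι (e g h)
  m_inv : ∀ g h, Γ.m (Γ.v (e g h)) = Γ.m (Γ.v h)

namespace BrauerAction

variable {G : Type} [Group G] {Γ : BrauerGraph}

/-- A free Brauer action: the action is free on the set of edges (loops counted twice,
i.e. on half-edges). -/
def IsFree (A : BrauerAction G Γ) : Prop := ∀ (g : G) (h : Γ.H), A.e g h = h → g = 1

/-- The orbit equivalence relation of the action on half-edges. -/
def orbSetoid (A : BrauerAction G Γ) : Setoid Γ.H where
  r h h' := ∃ g : G, A.e g h = h'
  iseqv := by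
    refine ⟨fun h => ⟨1, by simp⟩, ?_, ?_⟩
    · rintro h h' ⟨g, hg⟩
      exact ⟨g⁻¹, by rw [← hg, ← Equiv.Perm.mul_apply, ← map_mul]; simp⟩
    · rintro a b c ⟨g₁, hg₁⟩ ⟨g₂, hg₂⟩
      exact ⟨g₂ * g₁, by rw [map_mul, Equiv.Perm.mul_apply, hg₁, hg₂]⟩

/-- The orbit equivalence relation of the action restricted to a subset of half-edges. -/
def subOrbSetoid (A : BrauerAction G Γ) (P : Γ.H → Prop) : Setoid {h : Γ.H // P h} where
  r p q := ∃ g : G, A.e g p.1 = q.1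
  iseqv := by
    refine ⟨fun p => ⟨1, by simp⟩, ?_, ?_⟩
    · rintro p q ⟨g, hg⟩
      exact ⟨g⁻¹, by rw [← hg, ← Equiv.Perm.mul_apply, ← map_mul]; simp⟩
    · rintro a b c ⟨g₁, hg₁⟩ ⟨g₂, hg₂⟩
      exact ⟨g₂ * g₁, by rw [map_mul, Equiv.Perm.mul_apply, hg₁, hg₂]⟩

/-- The induced action of `g ∈ G` on vertices (defined via a chosen half-edge
in the fibre of the vertex). -/
noncomputable def vmap (A : BrauerAction G Γ) (g : G) (μ : Γ.V) : Γ.V :=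
  Γ.v (A.e g (Γ.v_surj μ).choose)

/-- The valency, in the orbit graph `Γ/G`, of the orbit vertex `μ̄` of `μ`: the number
of `G`-orbits of half-edges incident with a vertex in the orbit of `μ`. -/
noncomputable def orbVal (A : BrauerAction G Γ) (μ : Γ.V) : ℕ :=
  Nat.card (Quotient (A.subOrbSetoid (fun h => ∃ a : G, Γ.v (A.e a h) = μ)))

/-- The multiplicity function `m̄(μ̄) = val(μ)·m(μ)/val(μ̄)` of the orbit graph,
expressed on representatives. -/
noncomputable def mbar (A : BrauerAction G Γ) (μ : Γ.V) : ℕ :=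
  Γ.val μ * Γ.m μ / A.orbVal μ

end BrauerAction

namespace BrauerGraph

variable (Γ : BrauerGraph) {G : Type} [CommGroup G]

/-- `ω_μ`: the product of the values of a successor weighting `W` over all successor
pairs at the vertex `μ` (a successor pair `(i, σ i)` is identified with the half-edge
`i`). -/
noncomputable def omega (W : Γ.H → G) (μ : Γ.V) : G :=
  ∏ h ∈ Finset.univ.filter (fun h => Γ.v h = μ), W h

/-- `ω(i₁, i_{r+1})`: the product of the weights along the first `r` steps of the
successor sequence of the half-edge `h`. -/
noncomputable def wpath (W : Γ.H → G) (h : Γ.H) (r : ℕ) : G :=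
  ∏ t ∈ Finset.range r, W ((Γ.σ ^ t) h)

/-- The generating relation for the equivalence classes `[i, H_{μ,s}]` defining the
vertices of the Brauer covering graph `Δ_W`: a pair `(i, g)` (representing the pair of
`i` and the coset `H_{v i}·g`) is related to `(σ i, g·W(i))`, and to `(i, g·ω_{v i})`
(the latter identifies representatives of the same coset of `H_μ = ⟨ω_μ⟩`). -/
def covRel (W : Γ.H → G) : Γ.H × G → Γ.H × G → Prop := fun p q =>
  (q.1 = Γ.σ p.1 ∧ q.2 = p.2 * W p.1) ∨ (q.1 = p.1 ∧ q.2 = p.2 * Γ.omega W (Γ.v p.1))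

end BrauerGraph

/-- The number of (half-)edges from `μ` to `ν` in a loopless Brauer graph: the number
of parallel edges joining `μ` and `ν`, counted via their half-edges at `μ`. -/
noncomputable def BrauerGraph.nE (Γ : BrauerGraph) (μ ν : Γ.V) : ℕ :=
  Nat.card {h : Γ.H // Γ.v h = μ ∧ Γ.v (Γ.ι h) = ν}


section Aux

namespace BrauerGraph

variable (Γ : BrauerGraph)

/-- The minimal period of a half-edge under the successor permutation. -/
noncomputable def per (h : Γ.H) : ℕ := Function.minimalPeriod ⇑Γ.σ h

lemma pow_eq_iterate (n : ℕ) (h : Γ.H) : (Γ.σ ^ n) h = (⇑Γ.σ)^[n] h := by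
  rw [Equiv.Perm.iterate_eq_pow]

lemma per_pos (h : Γ.H) : 0 < Γ.per h := by
  apply Function.minimalPeriod_pos_of_mem_periodicPts
  refine ⟨orderOf Γ.σ, orderOf_pos Γ.σ, ?_⟩
  show (⇑Γ.σ)^[orderOf Γ.σ] h = h
  rw [Equiv.Perm.iterate_eq_pow, pow_orderOf_eq_one]; rfl

lemma per_iff (h : Γ.H) (n : ℕ) : (Γ.σ ^ n) h = h ↔ Γ.per h ∣ n := by
  constructor
  · intro hn
    exact Function.IsPeriodicPt.minimalPeriod_dvd
      (by show (⇑Γ.σ)^[n] h = h; rw [Equiv.Perm.iterate_eq_pow]; exact hn)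
  · rintro ⟨c, rfl⟩
    have : Function.IsPeriodicPt ⇑Γ.σ (Γ.per h) h := Function.iterate_minimalPeriod
    have := this.mul_const c
    show (Γ.σ ^ (Γ.per h * c)) h = h
    rw [← Equiv.Perm.iterate_eq_pow]
    exact this

lemma per_apply (h : Γ.H) : (Γ.σ ^ Γ.per h) h = h := (Γ.per_iff h _).2 dvd_rfl

lemma v_pow (h : Γ.H) (n : ℕ) : Γ.v ((Γ.σ ^ n) h) = Γ.v h :=
  ((Γ.v_eq_iff h _).2 ⟨(n : ℤ), by rw [zpow_natCast]⟩).symm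

lemma per_injOn (h : Γ.H) :
    ∀ a ∈ Finset.range (Γ.per h), ∀ b ∈ Finset.range (Γ.per h),
      (Γ.σ ^ a) h = (Γ.σ ^ b) h → a = b := by
  have key : ∀ a b : ℕ, a ≤ b → b < Γ.per h → (Γ.σ ^ a) h = (Γ.σ ^ b) h → a = b := by
    intro a b hab hb heq
    have h2 : (Γ.σ ^ a) ((Γ.σ ^ (b - a)) h) = (Γ.σ ^ a) h := by
      rw [← Equiv.Perm.mul_apply, ← pow_add, Nat.add_sub_cancel' hab]
      exact heq.symm
    have h3 : (Γ.σ ^ (b - a)) h = h := (Γ.σ ^ a).injective h2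
    have h4 := Nat.eq_zero_of_dvd_of_lt ((Γ.per_iff h _).1 h3) (by omega)
    omega
  intro a ha b hb heq
  simp only [Finset.mem_range] at ha hb
  rcases le_total a b with hab | hab
  · exact key a b hab hb heq
  · exact (key b a hab ha heq.symm).symm

lemma fiber_eq (h : Γ.H) :
    Finset.univ.filter (fun e => Γ.v e = Γ.v h) =
      (Finset.range (Γ.per h)).image (fun t => (Γ.σ ^ t) h) := by
  ext e
  simp only [Finset.mem_filter, Finset.mem_univ, true_and, Finset.mem_image,
    Finset.mem_range]
  constructor
  · intro hv
    obtain ⟨z, hz⟩ := (Γ.v_eq_iff h e).1 hv.symm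
    have hkpos : 0 < Γ.per h := Γ.per_pos h
    have hknz : ((Γ.per h : ℤ)) ≠ 0 := by exact_mod_cast hkpos.ne'
    refine ⟨(z % ((Γ.per h : ℕ) : ℤ)).toNat, ?_, ?_⟩
    · have h1 : z % ((Γ.per h : ℕ) : ℤ) < ((Γ.per h : ℕ) : ℤ) :=
        Int.emod_lt_of_pos z (by exact_mod_cast hkpos)
      have hnn : 0 ≤ z % ((Γ.per h : ℕ) : ℤ) := Int.emod_nonneg z hknz
      omega
    · have hnn : 0 ≤ z % ((Γ.per h : ℕ) : ℤ) := Int.emod_nonneg z hknz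
      have hfix : (Γ.σ ^ (((Γ.per h : ℕ) : ℤ) * (z / ((Γ.per h : ℕ) : ℤ)))) h = h := by
        rw [zpow_mul]
        refine Equiv.Perm.zpow_apply_eq_self_of_apply_eq_self ?_ _
        rw [zpow_natCast]
        exact Γ.per_apply h
      have : (Γ.σ ^ z) h = (Γ.σ ^ (z % ((Γ.per h : ℕ) : ℤ))) h := by
        conv_lhs => rw [← Int.mul_ediv_add_emod z ((Γ.per h : ℕ) : ℤ)]
        rw [add_comm, zpow_add, Equiv.Perm.mul_apply, hfix]
      rw [← hz, this, ← zpow_natCast, Int.toNat_of_nonneg hnn]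
  · rintro ⟨t, _, rfl⟩
    exact Γ.v_pow h t

lemma prod_fiber {M : Type*} [CommMonoid M] (h : Γ.H) (F : Γ.H → M) :
    ∏ e ∈ Finset.univ.filter (fun e => Γ.v e = Γ.v h), F e =
      ∏ t ∈ Finset.range (Γ.per h), F ((Γ.σ ^ t) h) := by
  rw [Γ.fiber_eq h, Finset.prod_image (Γ.per_injOn h)]

lemma sum_fiber (h : Γ.H) (F : Γ.H → ℕ) :
    ∑ e ∈ Finset.univ.filter (fun e => Γ.v e = Γ.v h), F e =
      ∑ t ∈ Finset.range (Γ.per h), F ((Γ.σ ^ t) h) := by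
  rw [Γ.fiber_eq h, Finset.sum_image (Γ.per_injOn h)]

variable {G : Type} [CommGroup G]

lemma wpath_zero (W : Γ.H → G) (h : Γ.H) : Γ.wpath W h 0 = 1 := by
  simp [BrauerGraph.wpath]

lemma wpath_add (W : Γ.H → G) (h : Γ.H) (a b : ℕ) :
    Γ.wpath W h (a + b) = Γ.wpath W h a * Γ.wpath W ((Γ.σ ^ a) h) b := by
  unfold BrauerGraph.wpath
  rw [Finset.prod_range_add]
  congr 1
  refine Finset.prod_congr rfl fun t _ => ?_
  congr 1
  rw [← Equiv.Perm.mul_apply, ← pow_add, add_comm]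

lemma wpath_per (W : Γ.H → G) (h : Γ.H) :
    Γ.wpath W h (Γ.per h) = Γ.omega W (Γ.v h) := by
  unfold BrauerGraph.wpath BrauerGraph.omega
  exact (Γ.prod_fiber h W).symm

lemma wpath_fixed (W : Γ.H → G) (homega : ∀ μ, Γ.omega W μ = 1) (h : Γ.H) (n : ℕ)
    (hfix : (Γ.σ ^ n) h = h) : Γ.wpath W h n = 1 := by
  obtain ⟨c, rfl⟩ := (Γ.per_iff h n).1 hfix
  induction c with
  | zero => simpa using Γ.wpath_zero W h
  | succ c ih =>
    have hfix' : (Γ.σ ^ (Γ.per h * c)) h = h := (Γ.per_iff h _).2 ⟨c, rfl⟩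
    rw [Nat.mul_succ, Γ.wpath_add, ih hfix', hfix', Γ.wpath_per, homega, one_mul]

/-- Count of half-edges with endpoint pair `x` along the successor walk. -/
noncomputable def cnt (x : Γ.V × Γ.V) (h : Γ.H) (n : ℕ) : ℕ :=
  ∑ t ∈ Finset.range n,
    if (Γ.v ((Γ.σ ^ t) h), Γ.v (Γ.ι ((Γ.σ ^ t) h))) = x then 1 else 0

lemma cnt_add (x : Γ.V × Γ.V) (h : Γ.H) (a b : ℕ) :
    Γ.cnt x h (a + b) = Γ.cnt x h a + Γ.cnt x ((Γ.σ ^ a) h) b := by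
  unfold BrauerGraph.cnt
  rw [Finset.sum_range_add]
  congr 1
  refine Finset.sum_congr rfl fun t _ => ?_
  have : (Γ.σ ^ (a + t)) h = (Γ.σ ^ t) ((Γ.σ ^ a) h) := by
    rw [← Equiv.Perm.mul_apply, ← pow_add, add_comm]
  rw [this]

lemma card_pair (x : Γ.V × Γ.V) :
    (Finset.univ.filter (fun e => (Γ.v e, Γ.v (Γ.ι e)) = x)).card = Γ.nE x.1 x.2 := by
  rw [BrauerGraph.nE, Nat.card_eq_fintype_card, Fintype.card_subtype]
  congr 1
  ext e
  simp [Prod.ext_iff]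

lemma cnt_per (x : Γ.V × Γ.V) (h : Γ.H) (hx1 : x.1 = Γ.v h) :
    Γ.cnt x h (Γ.per h) = Γ.nE x.1 x.2 := by
  unfold BrauerGraph.cnt
  rw [← Γ.sum_fiber h (fun e => if (Γ.v e, Γ.v (Γ.ι e)) = x then 1 else 0)]
  rw [Finset.sum_boole, Nat.cast_id, Finset.filter_filter]
  rw [← Γ.card_pair x]
  congr 1
  ext e
  simp only [Finset.mem_filter, Finset.mem_univ, true_and, and_iff_right_iff_imp]
  intro he
  have h1 : Γ.v e = x.1 := congrArg Prod.fst he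
  rw [h1, hx1]

lemma cnt_one_le (x : Γ.V × Γ.V) (h : Γ.H) (r : ℕ) (hr : 0 < r)
    (hh : (Γ.v h, Γ.v (Γ.ι h)) = x) : 1 ≤ Γ.cnt x h r := by
  unfold BrauerGraph.cnt
  have h0 : (0 : ℕ) ∈ Finset.range r := Finset.mem_range.2 hr
  have hle := Finset.single_le_sum
    (f := fun t => if (Γ.v ((Γ.σ ^ t) h), Γ.v (Γ.ι ((Γ.σ ^ t) h))) = x then (1 : ℕ) else 0)
    (fun i _ => Nat.zero_le _) h0
  simpa [hh] using hle

lemma core (x : Γ.V × Γ.V) (h h' : Γ.H)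
    (hh : (Γ.v h, Γ.v (Γ.ι h)) = x) (hh' : (Γ.v h', Γ.v (Γ.ι h')) = x)
    (n : ℕ) (hn : (Γ.σ ^ n) h = h')
    (hdvd : Γ.nE x.1 x.2 ∣ Γ.cnt x h n) : h' = h := by
  set k : ℕ := Γ.per h with hk
  have hkpos : 0 < k := Γ.per_pos h
  set α : ℕ := Γ.nE x.1 x.2 with hα
  have hx1 : x.1 = Γ.v h := by rw [← hh]
  obtain ⟨q, r, hr, hn'⟩ : ∃ q r, r < k ∧ n = k * q + r :=
    ⟨n / k, n % k, Nat.mod_lt _ hkpos, by rw [Nat.div_add_mod n k]⟩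
  have hfixq : (Γ.σ ^ (k * q)) h = h := (Γ.per_iff h _).2 ⟨q, rfl⟩
  have hsplit : Γ.cnt x h n = Γ.cnt x h (k * q) + Γ.cnt x h r := by
    rw [hn', Γ.cnt_add, hfixq]
  have hmul : Γ.cnt x h (k * q) = q * α := by
    clear hsplit hn' hn
    induction q with
    | zero => simp [BrauerGraph.cnt]
    | succ q ih =>
      have hfix' : (Γ.σ ^ (k * q)) h = h := (Γ.per_iff h _).2 ⟨q, rfl⟩
      rw [Nat.mul_succ, Γ.cnt_add, hfix', ih hfix', Γ.cnt_per x h hx1, ← hα,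
        Nat.succ_mul]
  have hdvdr : α ∣ Γ.cnt x h r := by
    have : α ∣ Γ.cnt x h (k * q) := ⟨q, by rw [hmul, mul_comm]⟩
    rw [hsplit] at hdvd
    exact (Nat.dvd_add_right this).mp hdvd
  have hr' : h' = (Γ.σ ^ r) h := by
    rw [← hn, hn', add_comm, pow_add, Equiv.Perm.mul_apply, hfixq]
  rcases Nat.eq_zero_or_pos r with hr0 | hr0
  · rw [hr', hr0, pow_zero, Equiv.Perm.one_apply]
  · exfalso
    have hcr1 : 1 ≤ Γ.cnt x h r := Γ.cnt_one_le x h r hr0 hh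
    have hcrα : α ≤ Γ.cnt x h r := Nat.le_of_dvd (by omega) hdvdr
    have hck : Γ.cnt x h k = α := Γ.cnt_per x h hx1
    have hsum : Γ.cnt x h r + Γ.cnt x ((Γ.σ ^ r) h) (k - r) = α := by
      rw [← hck, ← Γ.cnt_add]
      congr 1
      omega
    have htail1 : 1 ≤ Γ.cnt x ((Γ.σ ^ r) h) (k - r) := by
      refine Γ.cnt_one_le x _ _ (by omega) ?_
      rw [← hr']
      exact hh'
    omega

/-- The step permutation defining the covering relation (given that all `ω_μ = 1`). -/
noncomputable def Fperm (W : Γ.H → G) : Equiv.Perm (Γ.H × G) where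
  toFun p := (Γ.σ p.1, p.2 * W p.1)
  invFun q := (Γ.σ.symm q.1, q.2 * (W (Γ.σ.symm q.1))⁻¹)
  left_inv p := by simp
  right_inv q := by simp

lemma Fperm_pow (W : Γ.H → G) (h : Γ.H) (g : G) (n : ℕ) :
    ((Γ.Fperm W) ^ n) (h, g) = ((Γ.σ ^ n) h, g * Γ.wpath W h n) := by
  induction n with
  | zero => simp [Γ.wpath_zero W h]
  | succ n ih =>
    rw [pow_succ', Equiv.Perm.mul_apply, ih]
    show ((Γ.σ) ((Γ.σ ^ n) h), g * Γ.wpath W h n * W ((Γ.σ ^ n) h)) = _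
    rw [Prod.mk.injEq]
    refine ⟨?_, ?_⟩
    · rw [← Equiv.Perm.mul_apply, ← pow_succ']
    · rw [mul_assoc]
      congr 1
      unfold BrauerGraph.wpath
      rw [Finset.prod_range_succ]

lemma eqvgen_iff [Finite G] (W : Γ.H → G) (homega : ∀ μ, Γ.omega W μ = 1)
    (p q : Γ.H × G) :
    Relation.EqvGen (Γ.covRel W) p q ↔ ∃ n : ℕ, ((Γ.Fperm W) ^ n) p = q := by
  constructor
  · intro hpq
    induction hpq with
    | rel a b hab =>
      rcases hab with ⟨h1, h2⟩ | ⟨h1, h2⟩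
      · exact ⟨1, by rw [pow_one]; exact Prod.ext h1.symm h2.symm⟩
      · refine ⟨0, ?_⟩
        rw [pow_zero, Equiv.Perm.one_apply]
        rw [homega, mul_one] at h2
        exact Prod.ext h1.symm h2.symm
    | refl a => exact ⟨0, by simp⟩
    | symm a b _ ih =>
      obtain ⟨n, hn⟩ := ih
      set F := Γ.Fperm W
      have ho : 0 < orderOf F := orderOf_pos F
      refine ⟨n * orderOf F - n, ?_⟩
      rw [← hn, ← Equiv.Perm.mul_apply, ← pow_add]
      have : n * orderOf F - n + n = n * orderOf F := by
        have : n ≤ n * orderOf F := Nat.le_mul_of_pos_right n ho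
        omega
      rw [this, mul_comm n, pow_mul, pow_orderOf_eq_one, one_pow,
        Equiv.Perm.one_apply]
    | trans a b c _ _ ih1 ih2 =>
      obtain ⟨n1, hn1⟩ := ih1
      obtain ⟨n2, hn2⟩ := ih2
      exact ⟨n2 + n1, by rw [pow_add, Equiv.Perm.mul_apply, hn1, hn2]⟩
  · rintro ⟨n, rfl⟩
    induction n with
    | zero => rw [pow_zero, Equiv.Perm.one_apply]; exact Relation.EqvGen.refl p
    | succ n ih =>
      refine Relation.EqvGen.trans _ _ _ ih ?_
      refine Relation.EqvGen.rel _ _ (Or.inl ⟨?_, ?_⟩)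
      · rw [pow_succ', Equiv.Perm.mul_apply]; rfl
      · rw [pow_succ', Equiv.Perm.mul_apply]; rfl

end BrauerGraph

end Aux

section Main

lemma omega_eq_one (Γ : BrauerGraph) (D : Set (Γ.V × Γ.V))
    (W : Γ.H → ((x : D) → Multiplicative (ZMod (Γ.nE x.1.1 x.1.2))))
    (hWdef : ∀ (h : Γ.H) (x : D),
      W h x = if (Γ.v h, Γ.v (Γ.ι h)) = (x : Γ.V × Γ.V)
        then Multiplicative.ofAdd (1 : ZMod (Γ.nE x.1.1 x.1.2)) else 1) :
    ∀ μ : Γ.V, Γ.omega W μ = 1 := by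
  classical
  intro μ
  funext x
  rw [BrauerGraph.omega, Finset.prod_apply]
  calc ∏ h ∈ Finset.univ.filter (fun h => Γ.v h = μ), W h x
      = ∏ h ∈ Finset.univ.filter (fun h => Γ.v h = μ),
          Multiplicative.ofAdd
            (if (Γ.v h, Γ.v (Γ.ι h)) = (x : Γ.V × Γ.V) then (1 : ZMod (Γ.nE x.1.1 x.1.2)) else 0) := by
        refine Finset.prod_congr rfl fun h _ => ?_
        rw [hWdef]
        split <;> rfl
    _ = Multiplicative.ofAdd (∑ h ∈ Finset.univ.filter (fun h => Γ.v h = μ),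
          (if (Γ.v h, Γ.v (Γ.ι h)) = (x : Γ.V × Γ.V) then (1 : ZMod (Γ.nE x.1.1 x.1.2)) else 0)) :=
        (ofAdd_sum _ _).symm
    _ = 1 := by
        rw [Finset.sum_boole]
        suffices hcard : ((((Finset.univ.filter (fun h => Γ.v h = μ)).filter
            (fun h => (Γ.v h, Γ.v (Γ.ι h)) = (x : Γ.V × Γ.V))).card : ZMod (Γ.nE x.1.1 x.1.2)) = 0) by
          rw [hcard]; rfl
        by_cases hμ : x.1.1 = μ
        · have : (Finset.univ.filter (fun h => Γ.v h = μ)).filter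
              (fun h => (Γ.v h, Γ.v (Γ.ι h)) = (x : Γ.V × Γ.V)) =
              Finset.univ.filter (fun h => (Γ.v h, Γ.v (Γ.ι h)) = (x : Γ.V × Γ.V)) := by
            rw [Finset.filter_filter]
            refine Finset.filter_congr fun h _ => ?_
            constructor
            · exact fun hp => hp.2
            · intro hp
              refine ⟨?_, hp⟩
              have : Γ.v h = x.1.1 := congrArg Prod.fst hp
              rw [this, hμ]
          rw [this, Γ.card_pair, ZMod.natCast_self]
        · have : (Finset.univ.filter (fun h => Γ.v h = μ)).filter
              (fun h => (Γ.v h, Γ.v (Γ.ι h)) = (x : Γ.V × Γ.V)) = ∅ := by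
            rw [Finset.filter_filter, Finset.filter_eq_empty_iff]
            intro h _
            rintro ⟨h1, h2⟩
            exact hμ (by rw [← h1]; exact (congrArg Prod.fst h2).symm)
          rw [this, Finset.card_empty, Nat.cast_zero]

lemma wpath_apply (Γ : BrauerGraph) (D : Set (Γ.V × Γ.V))
    (W : Γ.H → ((x : D) → Multiplicative (ZMod (Γ.nE x.1.1 x.1.2))))
    (hWdef : ∀ (h : Γ.H) (x : D),
      W h x = if (Γ.v h, Γ.v (Γ.ι h)) = (x : Γ.V × Γ.V)
        then Multiplicative.ofAdd (1 : ZMod (Γ.nE x.1.1 x.1.2)) else 1)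
    (h : Γ.H) (n : ℕ) (x : D) :
    Γ.wpath W h n x =
      Multiplicative.ofAdd ((Γ.cnt (x : Γ.V × Γ.V) h n : ZMod (Γ.nE x.1.1 x.1.2))) := by
  classical
  rw [BrauerGraph.wpath, Finset.prod_apply]
  calc ∏ t ∈ Finset.range n, W ((Γ.σ ^ t) h) x
      = ∏ t ∈ Finset.range n,
          Multiplicative.ofAdd
            (if (Γ.v ((Γ.σ ^ t) h), Γ.v (Γ.ι ((Γ.σ ^ t) h))) = (x : Γ.V × Γ.V)
              then (1 : ZMod (Γ.nE x.1.1 x.1.2)) else 0) := by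
        refine Finset.prod_congr rfl fun t _ => ?_
        rw [hWdef]
        split <;> rfl
    _ = Multiplicative.ofAdd (∑ t ∈ Finset.range n,
          (if (Γ.v ((Γ.σ ^ t) h), Γ.v (Γ.ι ((Γ.σ ^ t) h))) = (x : Γ.V × Γ.V)
            then (1 : ZMod (Γ.nE x.1.1 x.1.2)) else 0)) := (ofAdd_sum _ _).symm
    _ = _ := by
        congr 1
        rw [BrauerGraph.cnt, Nat.cast_sum]
        refine Finset.sum_congr rfl fun t _ => ?_
        split <;> simp

lemma no_mult (Γ : BrauerGraph)
    (hloopless : ∀ h : Γ.H, Γ.v (Γ.ι h) ≠ Γ.v h)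
    (D : Set (Γ.V × Γ.V))
    (hD1 : ∀ x ∈ D, 2 ≤ Γ.nE x.1 x.2)
    (hD2 : ∀ μ ν : Γ.V, 2 ≤ Γ.nE μ ν → Xor' ((μ, ν) ∈ D) ((ν, μ) ∈ D))
    (W : Γ.H → ((x : D) → Multiplicative (ZMod (Γ.nE x.1.1 x.1.2))))
    (hWdef : ∀ (h : Γ.H) (x : D),
      W h x = if (Γ.v h, Γ.v (Γ.ι h)) = (x : Γ.V × Γ.V)
        then Multiplicative.ofAdd (1 : ZMod (Γ.nE x.1.1 x.1.2)) else 1)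
    (h h' : Γ.H) (n m : ℕ)
    (h1 : (Γ.σ ^ n) h = h') (h2 : (Γ.σ ^ m) (Γ.ι h) = Γ.ι h')
    (heq : Γ.wpath W h n = Γ.wpath W (Γ.ι h) m) : h' = h := by
  classical
  have hv' : Γ.v h' = Γ.v h := by rw [← h1]; exact Γ.v_pow h n
  have hvι' : Γ.v (Γ.ι h') = Γ.v (Γ.ι h) := by rw [← h2]; exact Γ.v_pow (Γ.ι h) m
  have hne : Γ.v (Γ.ι h) ≠ Γ.v h := hloopless h
  by_cases hβ : 2 ≤ Γ.nE (Γ.v h) (Γ.v (Γ.ι h))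
  · rcases hD2 _ _ hβ with ⟨hmem, _⟩ | ⟨hmem, _⟩
    · -- (v h, v ι h) ∈ D
      set x : D := ⟨(Γ.v h, Γ.v (Γ.ι h)), hmem⟩ with hxdef
      haveI : NeZero (Γ.nE x.1.1 x.1.2) := ⟨by
        have h2le : 2 ≤ Γ.nE (Γ.v h) (Γ.v (Γ.ι h)) := hD1 _ hmem
        have e1 : Γ.nE x.1.1 x.1.2 = Γ.nE (Γ.v h) (Γ.v (Γ.ι h)) := rfl
        omega⟩
      have hx : Γ.wpath W h n x = Γ.wpath W (Γ.ι h) m x := congrFun heq x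
      have hz : Γ.wpath W (Γ.ι h) m x = 1 := by
        rw [BrauerGraph.wpath, Finset.prod_apply]
        refine Finset.prod_eq_one fun t _ => ?_
        rw [hWdef]
        rw [if_neg]
        intro hcon
        have : Γ.v ((Γ.σ ^ t) (Γ.ι h)) = Γ.v h := congrArg Prod.fst hcon
        rw [Γ.v_pow (Γ.ι h) t] at this
        exact hne this
      rw [hz, wpath_apply Γ D W hWdef] at hx
      have hdvd : Γ.nE x.1.1 x.1.2 ∣ Γ.cnt (x : Γ.V × Γ.V) h n := by
        rw [← ZMod.natCast_eq_zero_iff]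
        have := hx
        rwa [show (1 : Multiplicative (ZMod (Γ.nE x.1.1 x.1.2))) =
          Multiplicative.ofAdd 0 from rfl, Multiplicative.ofAdd.apply_eq_iff_eq] at this
      exact Γ.core (x : Γ.V × Γ.V) h h' rfl (Prod.ext hv' hvι') n h1 hdvd
    · -- (v ι h, v h) ∈ D
      set x : D := ⟨(Γ.v (Γ.ι h), Γ.v h), hmem⟩ with hxdef
      haveI : NeZero (Γ.nE x.1.1 x.1.2) := ⟨by
        have h2le : 2 ≤ Γ.nE (Γ.v (Γ.ι h)) (Γ.v h) := hD1 _ hmem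
        have e1 : Γ.nE x.1.1 x.1.2 = Γ.nE (Γ.v (Γ.ι h)) (Γ.v h) := rfl
        omega⟩
      have hx : Γ.wpath W h n x = Γ.wpath W (Γ.ι h) m x := congrFun heq x
      have hz : Γ.wpath W h n x = 1 := by
        rw [BrauerGraph.wpath, Finset.prod_apply]
        refine Finset.prod_eq_one fun t _ => ?_
        rw [hWdef]
        rw [if_neg]
        intro hcon
        have : Γ.v ((Γ.σ ^ t) h) = Γ.v (Γ.ι h) := congrArg Prod.fst hcon
        rw [Γ.v_pow h t] at this
        exact hne this.symm
      rw [hz, wpath_apply Γ D W hWdef] at hx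
      have hdvd : Γ.nE x.1.1 x.1.2 ∣ Γ.cnt (x : Γ.V × Γ.V) (Γ.ι h) m := by
        rw [← ZMod.natCast_eq_zero_iff]
        have := hx.symm
        rwa [show (1 : Multiplicative (ZMod (Γ.nE x.1.1 x.1.2))) =
          Multiplicative.ofAdd 0 from rfl, Multiplicative.ofAdd.apply_eq_iff_eq] at this
      have hιι : Γ.v (Γ.ι (Γ.ι h)) = Γ.v h := by rw [Γ.ι_invol]
      have hιι' : Γ.v (Γ.ι (Γ.ι h')) = Γ.v h := by rw [Γ.ι_invol, hv']
      have hkey : Γ.ι h' = Γ.ι h :=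
        Γ.core (x : Γ.V × Γ.V) (Γ.ι h) (Γ.ι h')
          (Prod.ext rfl hιι) (Prod.ext hvι' hιι') m h2 hdvd
      have := congrArg Γ.ι hkey
      rwa [Γ.ι_invol, Γ.ι_invol] at this
  · -- at most one edge between v h and v ι h
    have hfin : Finite {e : Γ.H // Γ.v e = Γ.v h ∧ Γ.v (Γ.ι e) = Γ.v (Γ.ι h)} :=
      Subtype.finite
    have hss : Subsingleton {e : Γ.H // Γ.v e = Γ.v h ∧ Γ.v (Γ.ι e) = Γ.v (Γ.ι h)} := by
      by_contra hc
      rw [not_subsingleton_iff_nontrivial] at hc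
      have := Finite.one_lt_card_iff_nontrivial.2 hc
      rw [show Nat.card {e : Γ.H // Γ.v e = Γ.v h ∧ Γ.v (Γ.ι e) = Γ.v (Γ.ι h)} =
        Γ.nE (Γ.v h) (Γ.v (Γ.ι h)) from rfl] at this
      omega
    have := @Subsingleton.elim _ hss ⟨h', ⟨hv', hvι'⟩⟩ ⟨h, ⟨rfl, rfl⟩⟩
    exact congrArg Subtype.val this

end Main

/-- removal of multiple edges: Let `(Δ, 𝔬, m)` be a loopless Brauer
graph.  Encode the `α`-marked pairs together with their choice of distinguished vertex
as a set `D` of ordered pairs `(distinguished vertex, other vertex)`: every element of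
`D` is a marked pair (at least `2` parallel edges), and each marked pair appears in `D`
in exactly one of its two orders.  Let `G = ∏_{x ∈ D} ℤ_{α_x}` and let `W` assign
`z_x` to a successor pair `(i,j)` at a vertex `μ` when the endpoints of `i` form the
marked pair `x` with `μ` its distinguished vertex, and `id` otherwise.  Then
`ω_μ = id` for every vertex, `W` is a Brauer weighting, and the covering graph `Δ_W`
has no multiple edges: two covering edges with the same (unordered) pair of endpoints
coincide. -/
theorem multiple_edge_removal (Γ : BrauerGraph)
    (hloopless : ∀ h : Γ.H, Γ.v (Γ.ι h) ≠ Γ.v h)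
    (D : Set (Γ.V × Γ.V))
    (hD1 : ∀ x ∈ D, 2 ≤ Γ.nE x.1 x.2)
    (hD2 : ∀ μ ν : Γ.V, 2 ≤ Γ.nE μ ν → Xor' ((μ, ν) ∈ D) ((ν, μ) ∈ D))
    (W : Γ.H → ((x : D) → Multiplicative (ZMod (Γ.nE x.1.1 x.1.2))))
    (hWdef : ∀ (h : Γ.H) (x : D),
      W h x = if (Γ.v h, Γ.v (Γ.ι h)) = (x : Γ.V × Γ.V)
        then Multiplicative.ofAdd (1 : ZMod (Γ.nE x.1.1 x.1.2)) else 1) :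
    (∀ μ : Γ.V, Γ.omega W μ = 1) ∧
    (∀ μ : Γ.V, orderOf (Γ.omega W μ) ∣ Γ.m μ) ∧
    (∀ (h h' : Γ.H) (g g' : (x : D) → Multiplicative (ZMod (Γ.nE x.1.1 x.1.2))),
      ((Relation.EqvGen (Γ.covRel W) (h, g) (h', g') ∧
          Relation.EqvGen (Γ.covRel W) (Γ.ι h, g) (Γ.ι h', g')) ∨
        (Relation.EqvGen (Γ.covRel W) (h, g) (Γ.ι h', g') ∧
          Relation.EqvGen (Γ.covRel W) (Γ.ι h, g) (h', g'))) →
      ((h' = h ∧ g' = g) ∨ (h' = Γ.ι h ∧ g' = g))) := by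
  classical
  have homega : ∀ μ : Γ.V, Γ.omega W μ = 1 := omega_eq_one Γ D W hWdef
  refine ⟨homega, fun μ => by rw [homega, orderOf_one]; exact one_dvd _, ?_⟩
  haveI : ∀ x : D, NeZero (Γ.nE x.1.1 x.1.2) := fun x => ⟨by have := hD1 x x.2; omega⟩
  haveI : Finite D := Subtype.finite
  haveI : Finite ((x : D) → Multiplicative (ZMod (Γ.nE x.1.1 x.1.2))) := Pi.finite
  intro h h' g g' hcase
  have extract : ∀ (a b : Γ.H) (u u' : (x : D) → Multiplicative (ZMod (Γ.nE x.1.1 x.1.2))),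
      Relation.EqvGen (Γ.covRel W) (a, u) (b, u') →
      ∃ n : ℕ, (Γ.σ ^ n) a = b ∧ u' = u * Γ.wpath W a n := by
    intro a b u u' hab
    obtain ⟨n, hn⟩ := (Γ.eqvgen_iff W homega _ _).1 hab
    rw [Γ.Fperm_pow] at hn
    obtain ⟨e1, e2⟩ := Prod.mk.injEq .. ▸ hn
    exact ⟨n, e1, e2.symm⟩
  rcases hcase with ⟨ha, hb⟩ | ⟨ha, hb⟩
  · obtain ⟨n, hn1, hn2⟩ := extract _ _ _ _ ha
    obtain ⟨m, hm1, hm2⟩ := extract _ _ _ _ hb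
    have heq : Γ.wpath W h n = Γ.wpath W (Γ.ι h) m :=
      mul_left_cancel (by rw [← hn2, ← hm2])
    have hh : h' = h := no_mult Γ hloopless D hD1 hD2 W hWdef h h' n m hn1 hm1 heq
    refine Or.inl ⟨hh, ?_⟩
    rw [hn2, Γ.wpath_fixed W homega h n (by rw [hn1, hh]), mul_one]
  · obtain ⟨n, hn1, hn2⟩ := extract _ _ _ _ ha
    obtain ⟨m, hm1, hm2⟩ := extract _ _ _ _ hb
    have heq : Γ.wpath W h n = Γ.wpath W (Γ.ι h) m :=
      mul_left_cancel (by rw [← hn2, ← hm2])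
    have hm1' : (Γ.σ ^ m) (Γ.ι h) = Γ.ι (Γ.ι h') := by rw [Γ.ι_invol]; exact hm1
    have hh : Γ.ι h' = h := no_mult Γ hloopless D hD1 hD2 W hWdef h (Γ.ι h') n m hn1 hm1' heq
    have hh' : h' = Γ.ι h := by
      have := congrArg Γ.ι hh
      rwa [Γ.ι_invol] at this
    refine Or.inr ⟨hh', ?_⟩
    rw [hn2, Γ.wpath_fixed W homega h n (by rw [hn1, hh]), mul_one]
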